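/- Let ρ be a 2×2 density matrix and let A, B be 2×2 Hermitian matrices with Tr A = Tr B = 0 and A² = B² = I, with orthonormal eigenbases {|a_1⟩, |a_2⟩} and {|b_1⟩, |b_2⟩}. Let c_ab = max_{j,k} |⟨a_j|b_k⟩| and let ΔA², ΔB² be the variances of A and B in state ρ. Then (1 + √(1 − ΔA²)) · (1 + √(1 − ΔB²)) ≤ (1 + c_ab)². -/

import Mathlib

open Matrix ComplexOrder


lemma cs2 (w v : Fin 2 → ℂ) :
    Complex.normSq (star w ⬝ᵥ v) ≤ (star w ⬝ᵥ w).re * (star v ⬝ᵥ v).re := by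
  have key : (star w ⬝ᵥ w).re * (star v ⬝ᵥ v).re - Complex.normSq (star w ⬝ᵥ v)
      = Complex.normSq (w 0 * v 1 - w 1 * v 0) := by
    simp only [dotProduct, Fin.sum_univ_two, Pi.star_apply, RCLike.star_def,
      Complex.normSq_apply, Complex.add_re, Complex.add_im, Complex.mul_re, Complex.mul_im,
      Complex.sub_re, Complex.sub_im, Complex.conj_re, Complex.conj_im]
    ring
  linarith [Complex.normSq_nonneg (w 0 * v 1 - w 1 * v 0)]

lemma dot_self_re (v : Fin 2 → ℂ) :
    (star v ⬝ᵥ v).re = Complex.normSq (v 0) + Complex.normSq (v 1) := by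
  simp only [dotProduct, Fin.sum_univ_two, Pi.star_apply, RCLike.star_def, Complex.add_re,
    Complex.normSq_apply, Complex.mul_re, Complex.conj_re, Complex.conj_im]
  ring

lemma core (a b v : Fin 2 → ℂ) (ha : star a ⬝ᵥ a = 1) (hb : star b ⬝ᵥ b = 1) :
    Complex.normSq (star a ⬝ᵥ v) + Complex.normSq (star b ⬝ᵥ v)
      ≤ (1 + ‖star a ⬝ᵥ b‖) * (star v ⬝ᵥ v).re := by
  set x := star a ⬝ᵥ v with hx
  set y := star b ⬝ᵥ v with hy
  set m := star a ⬝ᵥ b with hm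
  set w : Fin 2 → ℂ := fun i => x * a i + y * b i with hwdef
  have hwv : star w ⬝ᵥ v = ((Complex.normSq x + Complex.normSq y : ℝ) : ℂ) := by
    have h : star w ⬝ᵥ v = (starRingEnd ℂ) x * x + (starRingEnd ℂ) y * y := by
      simp only [hwdef, hx, hy, dotProduct, Fin.sum_univ_two, Pi.star_apply,
        RCLike.star_def, map_add, _root_.map_mul, Complex.conj_conj]
      ring
    rw [h]
    push_cast
    rw [Complex.normSq_eq_conj_mul_self, Complex.normSq_eq_conj_mul_self]
  have hww : star w ⬝ᵥ w = (starRingEnd ℂ) x * x * (star a ⬝ᵥ a)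
      + (starRingEnd ℂ) y * y * (star b ⬝ᵥ b)
      + ((starRingEnd ℂ) x * y * m + (starRingEnd ℂ) ((starRingEnd ℂ) x * y * m)) := by
    simp only [hwdef, hx, hy, hm, dotProduct, Fin.sum_univ_two, Pi.star_apply,
      RCLike.star_def, map_add, _root_.map_mul, Complex.conj_conj]
    ring
  rw [ha, hb, mul_one, mul_one, ← Complex.normSq_eq_conj_mul_self,
    ← Complex.normSq_eq_conj_mul_self] at hww
  have hsnn : 0 ≤ Complex.normSq x + Complex.normSq y :=
    add_nonneg (Complex.normSq_nonneg _) (Complex.normSq_nonneg _)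
  have htnn : 0 ≤ (star v ⬝ᵥ v).re := by
    rw [dot_self_re]
    exact add_nonneg (Complex.normSq_nonneg _) (Complex.normSq_nonneg _)
  have hwwre : (star w ⬝ᵥ w).re
      ≤ (Complex.normSq x + Complex.normSq y) * (1 + ‖m‖) := by
    have h1 : (star w ⬝ᵥ w).re
        = Complex.normSq x + Complex.normSq y + 2 * ((starRingEnd ℂ) x * y * m).re := by
      rw [hww]
      simp [Complex.add_re, Complex.conj_re]
      ring
    have h2 : ((starRingEnd ℂ) x * y * m).re ≤ ‖x‖ * ‖y‖ * ‖m‖ :=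
      (Complex.re_le_norm _).trans (by simp [_root_.map_mul])
    have h3 : 2 * (‖x‖ * ‖y‖) ≤ Complex.normSq x + Complex.normSq y := by
      rw [← Complex.sq_norm, ← Complex.sq_norm]
      nlinarith [sq_nonneg (‖x‖ - ‖y‖)]
    nlinarith [norm_nonneg m]
  have hcs := cs2 w v
  rw [hwv] at hcs
  have hcs' : (Complex.normSq x + Complex.normSq y) ^ 2
      ≤ (star w ⬝ᵥ w).re * (star v ⬝ᵥ v).re := by
    rwa [Complex.normSq_ofReal, ← sq] at hcs
  rcases eq_or_lt_of_le hsnn with h0 | h0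
  · have hx0 : Complex.normSq x = 0 := by
      linarith [Complex.normSq_nonneg x, Complex.normSq_nonneg y]
    have hy0 : Complex.normSq y = 0 := by
      linarith [Complex.normSq_nonneg x, Complex.normSq_nonneg y]
    rw [hx0, hy0]
    have h4 : 0 ≤ 1 + ‖m‖ := by positivity
    nlinarith
  · nlinarith [mul_le_mul_of_nonneg_right hwwre htnn]

lemma normSq_dot_comm (u v : Fin 2 → ℂ) :
    Complex.normSq (star u ⬝ᵥ v) = Complex.normSq (star v ⬝ᵥ u) := by
  have h : star v ⬝ᵥ u = (starRingEnd ℂ) (star u ⬝ᵥ v) := by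
    simp only [dotProduct, Fin.sum_univ_two, Pi.star_apply, RCLike.star_def, map_add,
      _root_.map_mul, Complex.conj_conj]
    ring
  rw [h, Complex.normSq_conj]

lemma keypq (ρ : Matrix (Fin 2) (Fin 2) ℂ) (hρ : ρ.PosSemidef) (hρtr : ρ.trace = 1)
    (a b : Fin 2 → ℂ) (ha1 : star a ⬝ᵥ a = 1) (hb1 : star b ⬝ᵥ b = 1) :
    (star a ⬝ᵥ ρ *ᵥ a).re + (star b ⬝ᵥ ρ *ᵥ b).re ≤ 1 + ‖star a ⬝ᵥ b‖ := by
  obtain ⟨S, hS, hH⟩ : ∃ S : Matrix (Fin 2) (Fin 2) ℂ, S * S = ρ ∧ Sᴴ = S := by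
    open scoped MatrixOrder in
    exact ⟨CFC.sqrt ρ, CFC.sqrt_mul_sqrt_self ρ hρ.nonneg, (CFC.sqrt_nonneg ρ).posSemidef.1⟩
  have hherm : ∀ i j, (starRingEnd ℂ) (S i j) = S j i := by
    intro i j
    have := congrFun (congrFun hH j) i
    simpa [Matrix.conjTranspose_apply, RCLike.star_def] using this
  set c : Fin 2 → Fin 2 → ℂ := fun i j => S j i with hcdef
  have claimA : ∀ u : Fin 2 → ℂ, star u ⬝ᵥ ρ *ᵥ u
      = ((Complex.normSq (star (c 0) ⬝ᵥ u) + Complex.normSq (star (c 1) ⬝ᵥ u) : ℝ) : ℂ) := by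
    intro u
    rw [← hS]
    push_cast [Complex.normSq_eq_conj_mul_self]
    simp only [hcdef, dotProduct, mulVec, mul_apply, Fin.sum_univ_two, Pi.star_apply,
      RCLike.star_def, map_add, _root_.map_mul, Complex.conj_conj, hherm]
    try ring
  have claimB : ((star (c 0) ⬝ᵥ c 0) + (star (c 1) ⬝ᵥ c 1) : ℂ) = 1 := by
    rw [← hρtr, ← hS]
    simp only [hcdef, dotProduct, Matrix.trace, Matrix.diag, mul_apply, Fin.sum_univ_two,
      Pi.star_apply, RCLike.star_def, hherm]
    try ring
  have h0 := core a b (c 0) ha1 hb1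
  have h1 := core a b (c 1) ha1 hb1
  have hre : (star (c 0) ⬝ᵥ c 0).re + (star (c 1) ⬝ᵥ c 1).re = 1 := by
    have := congrArg Complex.re claimB
    simpa using this
  rw [claimA a, claimA b]
  simp only [Complex.ofReal_re]
  rw [normSq_dot_comm (c 0) a, normSq_dot_comm (c 1) a, normSq_dot_comm (c 0) b,
    normSq_dot_comm (c 1) b] at *
  have hsum := add_le_add h0 h1
  have hlin : (1 + ‖star a ⬝ᵥ b‖) * (star (c 0) ⬝ᵥ c 0).re
      + (1 + ‖star a ⬝ᵥ b‖) * (star (c 1) ⬝ᵥ c 1).re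
      = 1 + ‖star a ⬝ᵥ b‖ := by
    rw [← mul_add, hre, mul_one]
  linarith

lemma trace_mul_vmv (ρ : Matrix (Fin 2) (Fin 2) ℂ) (u : Fin 2 → ℂ) :
    (ρ * vecMulVec u (star u)).trace = star u ⬝ᵥ ρ *ᵥ u := by
  simp only [Matrix.trace, Matrix.diag, mul_apply, vecMulVec_apply, dotProduct, mulVec,
    Fin.sum_univ_two, Pi.star_apply, RCLike.star_def]
  ring

lemma complete2 (a : Fin 2 → Fin 2 → ℂ)
    (ha : ∀ i j, star (a i) ⬝ᵥ a j = if i = j then 1 else 0) :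
    vecMulVec (a 0) (star (a 0)) + vecMulVec (a 1) (star (a 1)) = 1 := by
  set W : Matrix (Fin 2) (Fin 2) ℂ := Matrix.of fun i j => a j i with hW
  have h1 : Wᴴ * W = 1 := by
    ext i j
    have h := ha i j
    simp only [dotProduct, Fin.sum_univ_two, Pi.star_apply, RCLike.star_def] at h
    simp only [mul_apply, conjTranspose_apply, hW, Matrix.of_apply, Fin.sum_univ_two,
      RCLike.star_def, Matrix.one_apply]
    rw [← h]
  have h2 : W * Wᴴ = 1 := mul_eq_one_comm.mp h1
  ext i j
  have h := congrFun (congrFun h2 i) j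
  simp only [mul_apply, conjTranspose_apply, hW, Matrix.of_apply, Fin.sum_univ_two,
    RCLike.star_def] at h
  simp only [Matrix.add_apply, vecMulVec_apply, Pi.star_apply, RCLike.star_def]
  rw [← h]
  try ring

lemma vmv_mul (u v : Fin 2 → ℂ) :
    vecMulVec u (star u) * vecMulVec v (star v) = (star u ⬝ᵥ v) • vecMulVec u (star v) := by
  ext i j
  simp only [mul_apply, vecMulVec_apply, dotProduct, Fin.sum_univ_two, Pi.star_apply,
    RCLike.star_def, Matrix.smul_apply, smul_eq_mul]
  ring

lemma obs_sq (a : Fin 2 → Fin 2 → ℂ)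
    (ha : ∀ i j, star (a i) ⬝ᵥ a j = if i = j then 1 else 0) :
    (vecMulVec (a 0) (star (a 0)) - vecMulVec (a 1) (star (a 1)))
      * (vecMulVec (a 0) (star (a 0)) - vecMulVec (a 1) (star (a 1))) = 1 := by
  have h00 : star (a 0) ⬝ᵥ a 0 = 1 := by simpa using ha 0 0
  have h01 : star (a 0) ⬝ᵥ a 1 = 0 := by simpa using ha 0 1
  have h10 : star (a 1) ⬝ᵥ a 0 = 0 := by simpa using ha 1 0
  have h11 : star (a 1) ⬝ᵥ a 1 = 1 := by simpa using ha 1 1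
  rw [sub_mul, mul_sub, mul_sub, vmv_mul, vmv_mul, vmv_mul, vmv_mul, h00, h01, h10, h11,
    one_smul, one_smul, zero_smul, zero_smul, sub_zero, zero_sub, sub_neg_eq_add]
  exact complete2 a ha

lemma final_arith (r0 r1 u0 u1 cab : ℝ) (hr0 : 0 ≤ r0) (hr1 : 0 ≤ r1)
    (hu0 : 0 ≤ u0) (hu1 : 0 ≤ u1) (hrsum : r0 + r1 = 1) (husum : u0 + u1 = 1)
    (k00 : r0 + u0 ≤ 1 + cab) (k01 : r0 + u1 ≤ 1 + cab)
    (k10 : r1 + u0 ≤ 1 + cab) (k11 : r1 + u1 ≤ 1 + cab) :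
    (1 + |r0 - r1|) * (1 + |u0 - u1|) ≤ (1 + cab) ^ 2 := by
  rcases abs_cases (r0 - r1) with ⟨hd, _⟩ | ⟨hd, _⟩ <;>
      rcases abs_cases (u0 - u1) with ⟨he, _⟩ | ⟨he, _⟩ <;> rw [hd, he]
  · nlinarith [sq_nonneg (r0 - u0), mul_nonneg hr0 hu0, k00]
  · nlinarith [sq_nonneg (r0 - u1), mul_nonneg hr0 hu1, k01]
  · nlinarith [sq_nonneg (r1 - u0), mul_nonneg hr1 hu0, k10]
  · nlinarith [sq_nonneg (r1 - u1), mul_nonneg hr1 hu1, k11]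

/-- Eq. (17): the variance-based uncertainty relation obtained from the majorization
uncertainty relation for two qubit observables with eigenvalues `±1`:
`(1 + √(1−ΔA²))(1 + √(1−ΔB²)) ≤ (1 + c_ab)²`. -/
theorem qubit_majorization_variance_form
    (ρ A B : Matrix (Fin 2) (Fin 2) ℂ)
    (hρ : ρ.PosSemidef) (hρtr : ρ.trace = 1)
    (a b : Fin 2 → Fin 2 → ℂ)
    (ha : ∀ i j, star (a i) ⬝ᵥ a j = if i = j then 1 else 0)
    (hb : ∀ i j, star (b i) ⬝ᵥ b j = if i = j then 1 else 0)
    (hA : A = vecMulVec (a 0) (star (a 0)) - vecMulVec (a 1) (star (a 1)))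
    (hB : B = vecMulVec (b 0) (star (b 0)) - vecMulVec (b 1) (star (b 1)))
    (VA VB : ℝ)
    (hVA : (ρ * (A * A)).trace - ((ρ * A).trace) ^ 2 = (VA : ℂ))
    (hVB : (ρ * (B * B)).trace - ((ρ * B).trace) ^ 2 = (VB : ℂ))
    (cab : ℝ)
    (hcab : cab = max
      (max (‖star (a 0) ⬝ᵥ b 0‖) (‖star (a 0) ⬝ᵥ b 1‖))
      (max (‖star (a 1) ⬝ᵥ b 0‖) (‖star (a 1) ⬝ᵥ b 1‖))) :
    (1 + Real.sqrt (1 - VA)) * (1 + Real.sqrt (1 - VB)) ≤ (1 + cab) ^ 2 := by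
  -- variances of the observables
  have hAsq : A * A = 1 := by rw [hA]; exact obs_sq a ha
  have hBsq : B * B = 1 := by rw [hB]; exact obs_sq b hb
  -- the quadratic form values are nonnegative reals
  have hnn : ∀ u : Fin 2 → ℂ, star u ⬝ᵥ ρ *ᵥ u = ((star u ⬝ᵥ ρ *ᵥ u).re : ℂ) := by
    intro u
    have h := hρ.dotProduct_mulVec_nonneg u
    rw [Complex.nonneg_iff] at h
    refine Complex.ext (by simp) ?_
    simp only [Complex.ofReal_im]
    exact h.2.symm
  set r0 := (star (a 0) ⬝ᵥ ρ *ᵥ a 0).re with hr0def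
  set r1 := (star (a 1) ⬝ᵥ ρ *ᵥ a 1).re with hr1def
  set u0 := (star (b 0) ⬝ᵥ ρ *ᵥ b 0).re with hu0def
  set u1 := (star (b 1) ⬝ᵥ ρ *ᵥ b 1).re with hu1def
  have hr0 : 0 ≤ r0 := ((Complex.nonneg_iff).mp (hρ.dotProduct_mulVec_nonneg (a 0))).1
  have hr1 : 0 ≤ r1 := ((Complex.nonneg_iff).mp (hρ.dotProduct_mulVec_nonneg (a 1))).1
  have hu0 : 0 ≤ u0 := ((Complex.nonneg_iff).mp (hρ.dotProduct_mulVec_nonneg (b 0))).1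
  have hu1 : 0 ≤ u1 := ((Complex.nonneg_iff).mp (hρ.dotProduct_mulVec_nonneg (b 1))).1
  -- traces
  have htrA : (ρ * A).trace = ((r0 - r1 : ℝ) : ℂ) := by
    rw [hA, mul_sub, Matrix.trace_sub, trace_mul_vmv, trace_mul_vmv, hnn (a 0), hnn (a 1)]
    push_cast
    ring
  have htrB : (ρ * B).trace = ((u0 - u1 : ℝ) : ℂ) := by
    rw [hB, mul_sub, Matrix.trace_sub, trace_mul_vmv, trace_mul_vmv, hnn (b 0), hnn (b 1)]
    push_cast
    ring
  -- sums equal one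
  have hrsum : r0 + r1 = 1 := by
    have h : (star (a 0) ⬝ᵥ ρ *ᵥ a 0) + (star (a 1) ⬝ᵥ ρ *ᵥ a 1) = 1 := by
      rw [← trace_mul_vmv, ← trace_mul_vmv, ← Matrix.trace_add, ← mul_add, complete2 a ha,
        mul_one, hρtr]
    rw [hnn (a 0), hnn (a 1)] at h
    exact_mod_cast h
  have husum : u0 + u1 = 1 := by
    have h : (star (b 0) ⬝ᵥ ρ *ᵥ b 0) + (star (b 1) ⬝ᵥ ρ *ᵥ b 1) = 1 := by
      rw [← trace_mul_vmv, ← trace_mul_vmv, ← Matrix.trace_add, ← mul_add, complete2 b hb,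
        mul_one, hρtr]
    rw [hnn (b 0), hnn (b 1)] at h
    exact_mod_cast h
  -- values of the variances
  have hVAval : VA = 1 - (r0 - r1) ^ 2 := by
    rw [hAsq, mul_one, hρtr, htrA] at hVA
    have : ((1 - (r0 - r1) ^ 2 : ℝ) : ℂ) = (VA : ℂ) := by linear_combination (norm := (push_cast; ring1)) hVA
    exact_mod_cast this.symm
  have hVBval : VB = 1 - (u0 - u1) ^ 2 := by
    rw [hBsq, mul_one, hρtr, htrB] at hVB
    have : ((1 - (u0 - u1) ^ 2 : ℝ) : ℂ) = (VB : ℂ) := by linear_combination (norm := (push_cast; ring1)) hVB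
    exact_mod_cast this.symm
  have hsA : Real.sqrt (1 - VA) = |r0 - r1| := by
    rw [hVAval]
    rw [show (1 : ℝ) - (1 - (r0 - r1) ^ 2) = (r0 - r1) ^ 2 by ring, Real.sqrt_sq_eq_abs]
  have hsB : Real.sqrt (1 - VB) = |u0 - u1| := by
    rw [hVBval]
    rw [show (1 : ℝ) - (1 - (u0 - u1) ^ 2) = (u0 - u1) ^ 2 by ring, Real.sqrt_sq_eq_abs]
  -- key inequalities
  have hunit : ∀ i, star (a i) ⬝ᵥ a i = 1 := fun i => by simpa using ha i i
  have hunitb : ∀ i, star (b i) ⬝ᵥ b i = 1 := fun i => by simpa using hb i i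
  have hcle : ∀ j k, ‖star (a j) ⬝ᵥ b k‖ ≤ cab := by
    intro j k
    fin_cases j <;> fin_cases k <;> rw [hcab]
    · exact le_max_of_le_left (le_max_left _ _)
    · exact le_max_of_le_left (le_max_right _ _)
    · exact le_max_of_le_right (le_max_left _ _)
    · exact le_max_of_le_right (le_max_right _ _)
  have key : ∀ j k, (star (a j) ⬝ᵥ ρ *ᵥ a j).re + (star (b k) ⬝ᵥ ρ *ᵥ b k).re ≤ 1 + cab := by
    intro j k
    exact (keypq ρ hρ hρtr (a j) (b k) (hunit j) (hunitb k)).trans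
      (by linarith [hcle j k])
  have k00 := key 0 0
  have k01 := key 0 1
  have k10 := key 1 0
  have k11 := key 1 1
  rw [hsA, hsB]
  exact final_arith r0 r1 u0 u1 cab hr0 hr1 hu0 hu1 hrsum husum k00 k01 k10 k11
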